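/- The n-th root of the n-th Motzkin number converges to 3; i.e. Filter.Tendsto (fun n : ℕ => ((∑ t in Finset.range (n+1), n.choose (2*t) * catalan t : ℕ) : ℝ) ^ ((n : ℝ)⁻¹)) Filter.atTop (nhds 3). -/

import Mathlib

open Finset Filter Real

private def M (n : ℕ) : ℕ := ∑ t ∈ Finset.range (n+1), n.choose (2*t) * catalan t

private lemma sum_range_two_mul (f : ℕ → ℕ) (m : ℕ) :
    ∑ k ∈ range (2*m), f k = ∑ i ∈ range m, (f (2*i) + f (2*i+1)) := by
  induction m with
  | zero => simp
  | succ m ih =>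
      have h2 : 2*(m+1) = (2*m) + 1 + 1 := by ring
      rw [h2, sum_range_succ, sum_range_succ, ih, sum_range_succ]
      omega

private lemma pow3_eq (n : ℕ) :
    (3:ℕ)^n = ∑ k ∈ range (2*(n+1)), n.choose k * 2^k := by
  have h := add_pow 2 1 n (R := ℕ)
  have h3 : (3:ℕ)^n = ∑ k ∈ range (n+1), n.choose k * 2^k := by
    rw [show (3:ℕ) = 2 + 1 by norm_num, h]
    apply Finset.sum_congr rfl
    intro k _
    simp [mul_comm]
  rw [h3]
  apply Finset.sum_subset
  · intro k hk
    simp only [mem_range] at *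
    omega
  · intro k _ hk
    simp only [mem_range, not_lt] at hk
    rw [Nat.choose_eq_zero_of_lt (by omega)]
    simp

private lemma catalan_le_four_pow (t : ℕ) : catalan t ≤ 4^t := by
  have h1 : (t+1) * catalan t = t.centralBinom := succ_mul_catalan_eq_centralBinom t
  have h2 : t.centralBinom ≤ 4^t := by
    have := Nat.sum_range_choose (2*t)
    calc t.centralBinom = (2*t).choose t := rfl
      _ ≤ ∑ i ∈ range (2*t+1), (2*t).choose i :=
          Finset.single_le_sum (f := fun i => (2*t).choose i) (fun _ _ => Nat.zero_le _)
            (by simp [Finset.mem_range]; omega)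
      _ = 2^(2*t) := Nat.sum_range_choose (2*t)
      _ = 4^t := by rw [pow_mul]; norm_num
  calc catalan t ≤ (t+1) * catalan t := Nat.le_mul_of_pos_left _ (by omega)
    _ ≤ 4^t := h1 ▸ h2

private lemma four_pow_le (t : ℕ) : 4^t ≤ (2*t+2) * ((t+1) * catalan t) := by
  rcases Nat.eq_zero_or_pos t with rfl | ht
  · simp [catalan]
  · have h1 : 4^t ≤ 2*t * t.centralBinom := Nat.four_pow_le_two_mul_self_mul_centralBinom t ht
    rw [succ_mul_catalan_eq_centralBinom]
    calc 4^t ≤ 2*t * t.centralBinom := h1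
      _ ≤ (2*t+2) * t.centralBinom := Nat.mul_le_mul_right _ (by omega)

private lemma M_upper (n : ℕ) : M n ≤ 3^n := by
  rw [pow3_eq, sum_range_two_mul]
  unfold M
  apply Finset.sum_le_sum
  intro i _
  calc n.choose (2*i) * catalan i ≤ n.choose (2*i) * 4^i :=
        Nat.mul_le_mul_left _ (catalan_le_four_pow i)
    _ = n.choose (2*i) * 2^(2*i) := by rw [pow_mul]; norm_num
    _ ≤ n.choose (2*i) * 2^(2*i) + n.choose (2*i+1) * 2^(2*i+1) := Nat.le_add_right _ _

private lemma M_lower (n : ℕ) : 3^n ≤ (2*n+1) * ((2*n+2) * ((n+1) * M n)) := by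
  have hS : (3:ℕ)^n ≤ (2*n+1) * ∑ i ∈ range (n+1), n.choose (2*i) * 4^i := by
    rw [pow3_eq, sum_range_two_mul, Finset.mul_sum]
    apply Finset.sum_le_sum
    intro i _
    have hodd : n.choose (2*i+1) ≤ n * n.choose (2*i) := by
      have h := Nat.choose_succ_right_eq n (2*i)
      calc n.choose (2*i+1) ≤ n.choose (2*i+1) * (2*i+1) := Nat.le_mul_of_pos_right _ (by omega)
        _ = n.choose (2*i) * (n - 2*i) := h
        _ ≤ n.choose (2*i) * n := Nat.mul_le_mul_left _ (Nat.sub_le _ _)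
        _ = n * n.choose (2*i) := mul_comm _ _
    have h4 : (2:ℕ)^(2*i) = 4^i := by rw [pow_mul]; norm_num
    calc n.choose (2*i) * 2^(2*i) + n.choose (2*i+1) * 2^(2*i+1)
        = n.choose (2*i) * 4^i + n.choose (2*i+1) * (2 * 4^i) := by
          rw [pow_succ', h4]
      _ ≤ n.choose (2*i) * 4^i + (n * n.choose (2*i)) * (2 * 4^i) := by
          gcongr
      _ = (2*n+1) * (n.choose (2*i) * 4^i) := by ring
  refine hS.trans ?_
  apply Nat.mul_le_mul_left
  unfold M
  rw [Finset.mul_sum, Finset.mul_sum]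
  apply Finset.sum_le_sum
  intro i hi
  simp only [mem_range] at hi
  calc n.choose (2*i) * 4^i ≤ n.choose (2*i) * ((2*i+2) * ((i+1) * catalan i)) :=
        Nat.mul_le_mul_left _ (four_pow_le i)
    _ ≤ n.choose (2*i) * ((2*n+2) * ((n+1) * catalan i)) := by
        have : i ≤ n := by omega
        gcongr
    _ = (2*n+2) * ((n+1) * (n.choose (2*i) * catalan i)) := by ring

private lemma M_pos (n : ℕ) : 0 < M n := by
  have : 1 ≤ M n := by
    unfold M
    calc 1 = n.choose (2*0) * catalan 0 := by simp
      _ ≤ _ := Finset.single_le_sum (f := fun t => n.choose (2*t) * catalan t)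
          (fun _ _ => Nat.zero_le _) (by simp)
  omega

private lemma log_div_nat_tendsto :
    Tendsto (fun n : ℕ => Real.log n * (n:ℝ)⁻¹) atTop (nhds 0) := by
  have h : Tendsto (fun x : ℝ => Real.log x / x) atTop (nhds 0) :=
    Real.isLittleO_log_id_atTop.tendsto_div_nhds_zero
  have h2 := h.comp (tendsto_natCast_atTop_atTop (R := ℝ))
  simpa [Function.comp_def, div_eq_mul_inv] using h2

/-- The n-th root of the n-th Motzkin number converges to 3. -/
theorem motzkin_root_tendsto_three :
    Filter.Tendsto
      (fun n : ℕ =>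
        ((∑ t ∈ Finset.range (n+1), n.choose (2*t) * catalan t : ℕ) : ℝ) ^ ((n : ℝ)⁻¹))
      Filter.atTop (nhds 3) := by
  have hfpos : ∀ n : ℕ, (0:ℝ) < (M n : ℝ) := fun n => by exact_mod_cast M_pos n
  -- log limit
  have hloglim : Tendsto (fun n : ℕ => Real.log (M n) * (n:ℝ)⁻¹) atTop (nhds (Real.log 3)) := by
    have hg0 : Tendsto
        (fun n : ℕ => Real.log ((2*n+1) * ((2*n+2) * (n+1)) : ℝ) * (n:ℝ)⁻¹) atTop (nhds 0) := by
      have hupper : Tendsto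
          (fun n : ℕ => (3*Real.log 4) * (n:ℝ)⁻¹ + 3*(Real.log n * (n:ℝ)⁻¹)) atTop (nhds 0) := by
        have h1 := tendsto_inv_atTop_nhds_zero_nat (𝕜 := ℝ)
        have h2 := (h1.const_mul (3*Real.log 4)).add (log_div_nat_tendsto.const_mul 3)
        simpa using h2
      apply tendsto_of_tendsto_of_tendsto_of_le_of_le' tendsto_const_nhds hupper
      · filter_upwards [eventually_ge_atTop 1] with n hn
        have hn' : (1:ℝ) ≤ (n:ℝ) := by exact_mod_cast hn
        have h23 : (1:ℝ) ≤ (2*(n:ℝ)+2)*((n:ℝ)+1) := by nlinarith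
        apply mul_nonneg (Real.log_nonneg (by nlinarith)) (by positivity)
      · filter_upwards [eventually_ge_atTop 1] with n hn
        have hn' : (1:ℝ) ≤ (n:ℝ) := by exact_mod_cast hn
        have hle : ((2*n+1) * ((2*n+2) * (n+1)) : ℝ) ≤ (4*n)^3 := by
          have h1 : (n:ℝ)^2 ≤ (n:ℝ)^3 := pow_le_pow_right₀ hn' (by norm_num)
          have h2 : (n:ℝ) ≤ (n:ℝ)^3 := le_self_pow₀ (by linarith) (by norm_num)
          have h3 : (1:ℝ) ≤ (n:ℝ)^3 := one_le_pow₀ hn'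
          nlinarith
        have hlog : Real.log ((2*n+1) * ((2*n+2) * (n+1)) : ℝ) ≤ 3 * (Real.log 4 + Real.log n) := by
          calc Real.log ((2*n+1) * ((2*n+2) * (n+1)) : ℝ) ≤ Real.log ((4*(n:ℝ))^3) :=
                Real.log_le_log (by positivity) hle
            _ = 3 * Real.log (4*(n:ℝ)) := by rw [Real.log_pow]; norm_num
            _ = 3 * (Real.log 4 + Real.log n) := by
                rw [Real.log_mul (by norm_num) (by positivity)]
        calc Real.log ((2*n+1) * ((2*n+2) * (n+1)) : ℝ) * (n:ℝ)⁻¹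
            ≤ (3 * (Real.log 4 + Real.log n)) * (n:ℝ)⁻¹ :=
              mul_le_mul_of_nonneg_right hlog (by positivity)
          _ = (3*Real.log 4) * (n:ℝ)⁻¹ + 3*(Real.log n * (n:ℝ)⁻¹) := by ring
    have hlower : Tendsto
        (fun n : ℕ => Real.log 3 - Real.log ((2*n+1) * ((2*n+2) * (n+1)) : ℝ) * (n:ℝ)⁻¹)
        atTop (nhds (Real.log 3)) := by
      simpa using (tendsto_const_nhds (x := Real.log 3) (f := atTop)).sub hg0
    apply tendsto_of_tendsto_of_tendsto_of_le_of_le' hlower tendsto_const_nhds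
    · filter_upwards [eventually_ge_atTop 1] with n hn
      have hn' : (1:ℝ) ≤ (n:ℝ) := by exact_mod_cast hn
      have hne : (n:ℝ) ≠ 0 := by positivity
      have key : (3:ℝ)^n ≤ ((2*n+1) * ((2*n+2) * (n+1)) : ℝ) * (M n : ℝ) := by
        have := M_lower n
        have h2 : ((3:ℕ)^n : ℝ) ≤ (((2*n+1) * ((2*n+2) * ((n+1) * M n)) : ℕ) : ℝ) := by
          exact_mod_cast this
        push_cast at h2 ⊢
        nlinarith [h2]
      have hlog : (n:ℝ) * Real.log 3 ≤
          Real.log ((2*n+1) * ((2*n+2) * (n+1)) : ℝ) + Real.log (M n : ℝ) := by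
        calc (n:ℝ) * Real.log 3 = Real.log ((3:ℝ)^n) := (Real.log_pow 3 n).symm
          _ ≤ Real.log (((2*n+1) * ((2*n+2) * (n+1)) : ℝ) * (M n : ℝ)) :=
              Real.log_le_log (by positivity) key
          _ = _ := Real.log_mul (by positivity) (ne_of_gt (hfpos n))
      have h3 := mul_le_mul_of_nonneg_right hlog (by positivity : (0:ℝ) ≤ (n:ℝ)⁻¹)
      rw [add_mul, mul_comm (n:ℝ) (Real.log 3), mul_assoc, mul_inv_cancel₀ hne, mul_one] at h3
      linarith
    · filter_upwards [eventually_ge_atTop 1] with n hn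
      have hn' : (1:ℝ) ≤ (n:ℝ) := by exact_mod_cast hn
      have hne : (n:ℝ) ≠ 0 := by positivity
      have key : (M n : ℝ) ≤ (3:ℝ)^n := by exact_mod_cast M_upper n
      have hlog : Real.log (M n : ℝ) ≤ (n:ℝ) * Real.log 3 := by
        calc Real.log (M n : ℝ) ≤ Real.log ((3:ℝ)^n) := Real.log_le_log (hfpos n) key
          _ = (n:ℝ) * Real.log 3 := Real.log_pow 3 n
      have h3 := mul_le_mul_of_nonneg_right hlog (by positivity : (0:ℝ) ≤ (n:ℝ)⁻¹)
      rw [mul_comm (n:ℝ) (Real.log 3), mul_assoc, mul_inv_cancel₀ hne, mul_one] at h3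
      exact h3
  have heq : ∀ n : ℕ, ((M n : ℝ)) ^ ((n:ℝ)⁻¹) = Real.exp (Real.log (M n) * (n:ℝ)⁻¹) :=
    fun n => Real.rpow_def_of_pos (hfpos n) _
  have := (Real.continuous_exp.tendsto (Real.log 3)).comp hloglim
  simp only [Function.comp_def] at this
  rw [Real.exp_log (by norm_num : (0:ℝ) < 3)] at this
  convert this using 2 with n
  exact heq n
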